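/- For a prime $p$, a nonempty subset $A \subseteq \mathbb{F}_p$, a nonempty subset $S \subseteq \mathbb{F}_p^*$, and any $c \in (0,1]$, there are at least $(1-c)|S|$ elements $\xi \in S$ satisfying $|A + \xi A| \ge c \cdot (1/p + p/(|S||A|^2))^{-1}$. -/

import Mathlib

open Finset Pointwise

section aux
variable {p : ℕ} [Fact p.Prime]

private def rr (A : Finset (ZMod p)) (ξ x : ZMod p) : ℕ :=
  ((A ×ˢ A).filter (fun z => z.1 + ξ * z.2 = x)).card

private def En (A : Finset (ZMod p)) (ξ : ZMod p) : ℕ :=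
  (((A ×ˢ A) ×ˢ (A ×ˢ A)).filter
    (fun z => z.1.1 + ξ * z.1.2 = z.2.1 + ξ * z.2.2)).card

private lemma En_eq (A : Finset (ZMod p)) (ξ : ZMod p) :
    En A ξ = ∑ x : ZMod p, (rr A ξ x) ^ 2 := by
  classical
  have h1 : En A ξ = ∑ z1 ∈ A ×ˢ A, rr A ξ (z1.1 + ξ * z1.2) := by
    rw [En, card_filter, Finset.sum_product]
    refine Finset.sum_congr rfl fun z1 _ => ?_
    rw [rr, card_filter]
    refine Finset.sum_congr rfl fun z2 _ => ?_
    simp [eq_comm]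
  rw [h1, ← Finset.sum_fiberwise' (A ×ˢ A) (fun z1 => z1.1 + ξ * z1.2) (rr A ξ)]
  refine Finset.sum_congr rfl fun x _ => ?_
  rw [Finset.sum_const, smul_eq_mul, ← rr, sq]

private lemma rr_sum (A : Finset (ZMod p)) (ξ : ZMod p) :
    ∑ x : ZMod p, rr A ξ x = A.card ^ 2 := by
  classical
  rw [sq, ← Finset.card_product]
  exact (Finset.card_eq_sum_card_fiberwise (fun z _ => Finset.mem_univ (z.1 + ξ * z.2))).symm

private lemma rr_zero (A : Finset (ZMod p)) (ξ x : ZMod p) (hx : x ∉ A + ξ • A) :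
    rr A ξ x = 0 := by
  classical
  rw [rr, Finset.card_eq_zero, Finset.filter_eq_empty_iff]
  rintro ⟨a, a'⟩ hz h
  rw [Finset.mem_product] at hz
  exact hx (h ▸ Finset.add_mem_add hz.1 (Finset.smul_mem_smul_finset hz.2))

private lemma cs_gen (A : Finset (ZMod p)) (ξ : ZMod p) (B : Finset (ZMod p))
    (hB : ∀ x, x ∉ B → rr A ξ x = 0) :
    ((A.card : ℝ)) ^ 4 ≤ (B.card : ℝ) * (En A ξ : ℝ) := by
  classical
  have hsum : ∑ x ∈ B, (rr A ξ x : ℝ) = (A.card : ℝ) ^ 2 := by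
    rw [Finset.sum_subset (Finset.subset_univ B)
      (fun x _ hx => by rw [hB x hx]; norm_num),
      ← Nat.cast_sum, rr_sum]
    push_cast; ring
  have hcs := sq_sum_le_card_mul_sum_sq (s := B) (f := fun x => (rr A ξ x : ℝ))
  have hE : ∑ x ∈ B, (rr A ξ x : ℝ) ^ 2 ≤ (En A ξ : ℝ) := by
    rw [En_eq]
    push_cast
    exact Finset.sum_le_sum_of_subset_of_nonneg (Finset.subset_univ B)
      (fun _ _ _ => by positivity)
  calc ((A.card : ℝ)) ^ 4 = ((A.card : ℝ) ^ 2) ^ 2 := by ring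
    _ = (∑ x ∈ B, (rr A ξ x : ℝ)) ^ 2 := by rw [hsum]
    _ ≤ (B.card : ℝ) * ∑ x ∈ B, (rr A ξ x : ℝ) ^ 2 := hcs
    _ ≤ (B.card : ℝ) * (En A ξ : ℝ) := by
        exact mul_le_mul_of_nonneg_left hE (by positivity)

end aux

section aux2
variable {p : ℕ} [Fact p.Prime]

private lemma En_total (A : Finset (ZMod p)) :
    ∑ ξ ∈ (Finset.univ.erase (0 : ZMod p)), (En A ξ : ℝ)
      ≤ (A.card : ℝ) ^ 2 * ((p : ℝ) - 1) + (A.card : ℝ) ^ 3 * ((A.card : ℝ) - 1) := by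
  classical
  have hp1 : 1 ≤ p := (Fact.out : p.Prime).one_lt.le
  have hswap : ∑ ξ ∈ (Finset.univ.erase (0 : ZMod p)), (En A ξ : ℝ)
      = ∑ z ∈ (A ×ˢ A) ×ˢ (A ×ˢ A),
          (((Finset.univ.erase (0 : ZMod p)).filter
            (fun ξ => z.1.1 + ξ * z.1.2 = z.2.1 + ξ * z.2.2)).card : ℝ) := by
    simp_rw [En, card_filter]
    push_cast
    rw [Finset.sum_comm]
  rw [hswap]
  have hbound : ∀ z ∈ (A ×ˢ A) ×ˢ (A ×ˢ A),
      ((((Finset.univ.erase (0 : ZMod p))).filter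
        (fun ξ => z.1.1 + ξ * z.1.2 = z.2.1 + ξ * z.2.2)).card : ℝ)
      ≤ (if z.1.2 = z.2.2 then (if z.1.1 = z.2.1 then (p : ℝ) - 1 else 0) else 1) := by
    rintro ⟨⟨a, a'⟩, b, b'⟩ _
    dsimp only
    split_ifs with h1 h2
    · have hc : (((Finset.univ.erase (0 : ZMod p))).filter
          (fun ξ => a + ξ * a' = b + ξ * b')).card ≤ p - 1 := by
        calc _ ≤ (Finset.univ.erase (0 : ZMod p)).card := Finset.card_filter_le _ _
          _ = p - 1 := by
              rw [Finset.card_erase_of_mem (Finset.mem_univ _), Finset.card_univ, ZMod.card]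
      calc (_ : ℝ) ≤ ((p - 1 : ℕ) : ℝ) := by exact_mod_cast hc
        _ = (p : ℝ) - 1 := by push_cast [hp1]; ring
    · subst h1
      have : ((Finset.univ.erase (0 : ZMod p)).filter
          (fun ξ => a + ξ * a' = b + ξ * a')) = ∅ := by
        rw [Finset.filter_eq_empty_iff]
        intro ξ _ h
        exact h2 (by linear_combination h)
      rw [this]
      simp
    · have hc : (((Finset.univ.erase (0 : ZMod p))).filter
          (fun ξ => a + ξ * a' = b + ξ * b')).card ≤ 1 := by
        rw [Finset.card_le_one]
        intro ξ₁ hξ₁ ξ₂ hξ₂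
        rw [Finset.mem_filter] at hξ₁ hξ₂
        have t1 : ξ₁ * (a' - b') = b - a := by linear_combination hξ₁.2
        have t2 : ξ₂ * (a' - b') = b - a := by linear_combination hξ₂.2
        exact mul_right_cancel₀ (sub_ne_zero.mpr h1) (t1.trans t2.symm)
      exact_mod_cast hc
  refine le_trans (Finset.sum_le_sum hbound) (le_of_eq ?_)
  rw [Finset.sum_product]
  have hrow2 : ∀ z1 ∈ A ×ˢ A,
      (∑ z2 ∈ A ×ˢ A, (if z1.2 = z2.2 then (if z1.1 = z2.1 then (p : ℝ) - 1 else 0) else 1))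
      = (A.card : ℝ) * ((A.card : ℝ) - 1) + ((p : ℝ) - 1) := by
    rintro ⟨a, a'⟩ hz
    rw [Finset.mem_product] at hz
    rw [Finset.sum_product]
    have hrow : ∀ b ∈ A, (∑ b' ∈ A, (if a' = b' then (if a = b then (p : ℝ) - 1 else 0) else 1))
        = (A.card : ℝ) - 1 + (if a = b then (p : ℝ) - 1 else 0) := by
      intro b _
      have hsplit : ∀ b', (if a' = b' then (if a = b then (p : ℝ) - 1 else 0) else 1)
          = 1 + (if a' = b' then (if a = b then (p : ℝ) - 1 else 0) - 1 else 0) := by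
        intro b'; split_ifs <;> ring
      simp_rw [hsplit]
      rw [Finset.sum_add_distrib, Finset.sum_const, Finset.sum_ite_eq _ a', if_pos hz.2]
      push_cast [nsmul_eq_mul]
      ring
    rw [Finset.sum_congr rfl hrow, Finset.sum_add_distrib, Finset.sum_const,
      Finset.sum_ite_eq _ a, if_pos hz.1]
    push_cast [nsmul_eq_mul]
    ring
  rw [Finset.sum_congr rfl hrow2, Finset.sum_const, Finset.card_product]
  push_cast [nsmul_eq_mul]
  ring

end aux2

set_option maxHeartbeats 1000000 in
theorem stmt11 (p : ℕ) (hp : p.Prime)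
    (A : Finset (ZMod p)) (hA : A.Nonempty)
    (S : Finset (ZMod p)) (hS : S.Nonempty) (hS0 : ∀ ξ ∈ S, ξ ≠ 0)
    (c : ℝ) (hc0 : 0 < c) (hc1 : c ≤ 1) :
    ((S.filter (fun ξ => ((A + ξ • A).card : ℝ)
        ≥ c * (1 / (p : ℝ) + (p : ℝ) / ((S.card : ℝ) * (A.card : ℝ) ^ 2))⁻¹)).card : ℝ)
      ≥ (1 - c) * S.card := by
  haveI : Fact p.Prime := ⟨hp⟩
  have hp2 : (2 : ℝ) ≤ p := by exact_mod_cast hp.two_le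
  have hp0 : (0 : ℝ) < p := by linarith
  have hn1 : (1 : ℝ) ≤ A.card := by exact_mod_cast hA.card_pos
  have hs1 : (1 : ℝ) ≤ S.card := by exact_mod_cast hS.card_pos
  have hnp : (A.card : ℝ) ≤ p := by
    have h := Finset.card_le_univ A
    rw [ZMod.card] at h
    exact_mod_cast h
  set n : ℝ := (A.card : ℝ) with hn
  set s : ℝ := (S.card : ℝ) with hs
  set X : ℝ := 1 / (p : ℝ) + (p : ℝ) / (s * n ^ 2) with hX
  have hX0 : 0 < X := by positivity
  set M : ℝ := X⁻¹ with hM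
  have hM0 : 0 < M := inv_pos.mpr hX0
  have hcM0 : 0 ≤ c * M := (mul_pos hc0 hM0).le
  have hsub : S ⊆ Finset.univ.erase (0 : ZMod p) := fun ξ hξ =>
    Finset.mem_erase.mpr ⟨hS0 ξ hξ, Finset.mem_univ ξ⟩
  have h1 : ∀ ξ : ZMod p, n ^ 4 ≤ ((A + ξ • A).card : ℝ) * (En A ξ : ℝ) := fun ξ =>
    cs_gen A ξ (A + ξ • A) (fun x hx => rr_zero A ξ x hx)
  have h2 : ∀ ξ : ZMod p, n ^ 4 ≤ (p : ℝ) * (En A ξ : ℝ) := by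
    intro ξ
    have h := cs_gen A ξ Finset.univ (fun x hx => absurd (Finset.mem_univ x) hx)
    rwa [Finset.card_univ, ZMod.card] at h
  have hEsum : ∑ ξ ∈ S, (En A ξ : ℝ) ≤ s * n ^ 4 / p + (p : ℝ) * n ^ 2 := by
    have e1 : ∀ ξ ∈ Finset.univ.erase (0 : ZMod p), (0 : ℝ) ≤ (En A ξ : ℝ) - n ^ 4 / p := by
      intro ξ _
      rw [sub_nonneg, div_le_iff₀ hp0]
      linarith [h2 ξ]
    have e2 : ∑ ξ ∈ S, ((En A ξ : ℝ) - n ^ 4 / p)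
        ≤ ∑ ξ ∈ Finset.univ.erase (0 : ZMod p), ((En A ξ : ℝ) - n ^ 4 / p) :=
      Finset.sum_le_sum_of_subset_of_nonneg hsub (fun ξ hξ _ => e1 ξ hξ)
    have hcerase : ((Finset.univ.erase (0 : ZMod p)).card : ℝ) = (p : ℝ) - 1 := by
      rw [Finset.card_erase_of_mem (Finset.mem_univ _), Finset.card_univ, ZMod.card]
      push_cast [hp.one_lt.le]
      ring
    have e3 : ∑ ξ ∈ Finset.univ.erase (0 : ZMod p), ((En A ξ : ℝ) - n ^ 4 / p)
        ≤ (n ^ 2 * ((p : ℝ) - 1) + n ^ 3 * (n - 1)) - ((p : ℝ) - 1) * (n ^ 4 / p) := by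
      rw [Finset.sum_sub_distrib, Finset.sum_const, nsmul_eq_mul, hcerase]
      linarith [En_total A]
    have e4 : ∑ ξ ∈ S, (En A ξ : ℝ)
        = ∑ ξ ∈ S, ((En A ξ : ℝ) - n ^ 4 / p) + s * (n ^ 4 / p) := by
      rw [Finset.sum_sub_distrib, Finset.sum_const, nsmul_eq_mul, hs]
      ring
    have key : n ^ 2 ≤ (p : ℝ) * (n + 1) := by nlinarith
    have poly : (n ^ 2 * ((p : ℝ) - 1) + n ^ 3 * (n - 1)) * p - ((p : ℝ) - 1) * n ^ 4
        ≤ ((p : ℝ) * n ^ 2) * p := by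
      nlinarith [mul_le_mul_of_nonneg_left key (sq_nonneg n)]
    have e5 : (n ^ 2 * ((p : ℝ) - 1) + n ^ 3 * (n - 1)) - ((p : ℝ) - 1) * (n ^ 4 / p)
        ≤ (p : ℝ) * n ^ 2 := by
      have hp0' : (p : ℝ) ≠ 0 := ne_of_gt hp0
      calc (n ^ 2 * ((p : ℝ) - 1) + n ^ 3 * (n - 1)) - ((p : ℝ) - 1) * (n ^ 4 / p)
          = ((n ^ 2 * ((p : ℝ) - 1) + n ^ 3 * (n - 1)) * p - ((p : ℝ) - 1) * n ^ 4) / p := by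
            field_simp
        _ ≤ (((p : ℝ) * n ^ 2) * p) / p := by
            exact (div_le_div_iff_of_pos_right hp0).mpr poly
        _ = (p : ℝ) * n ^ 2 := by field_simp
    calc ∑ ξ ∈ S, (En A ξ : ℝ)
        = ∑ ξ ∈ S, ((En A ξ : ℝ) - n ^ 4 / p) + s * (n ^ 4 / p) := e4
      _ ≤ ((n ^ 2 * ((p : ℝ) - 1) + n ^ 3 * (n - 1)) - ((p : ℝ) - 1) * (n ^ 4 / p))
            + s * (n ^ 4 / p) := by linarith
      _ ≤ (p : ℝ) * n ^ 2 + s * (n ^ 4 / p) := by linarith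
      _ = s * n ^ 4 / p + (p : ℝ) * n ^ 2 := by ring
  have hsplit : (S.filter (fun ξ => ((A + ξ • A).card : ℝ) ≥ c * M)).card
      + (S.filter (fun ξ => ¬ (((A + ξ • A).card : ℝ) ≥ c * M))).card = S.card :=
    Finset.card_filter_add_card_filter_not _
  have hbad : ∀ ξ ∈ S.filter (fun ξ => ¬ (((A + ξ • A).card : ℝ) ≥ c * M)),
      n ^ 4 ≤ c * M * (En A ξ : ℝ) := by
    intro ξ hξ
    rw [Finset.mem_filter] at hξ
    have hlt : ((A + ξ • A).card : ℝ) < c * M := not_le.mp hξ.2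
    calc n ^ 4 ≤ ((A + ξ • A).card : ℝ) * (En A ξ : ℝ) := h1 ξ
      _ ≤ c * M * (En A ξ : ℝ) :=
          mul_le_mul_of_nonneg_right hlt.le (Nat.cast_nonneg _)
  have hbadsum : (((S.filter (fun ξ => ¬ (((A + ξ • A).card : ℝ) ≥ c * M))).card : ℝ)) * n ^ 4
      ≤ c * M * ∑ ξ ∈ S, (En A ξ : ℝ) := by
    calc (((S.filter (fun ξ => ¬ (((A + ξ • A).card : ℝ) ≥ c * M))).card : ℝ)) * n ^ 4
        = ∑ _ξ ∈ S.filter (fun ξ => ¬ (((A + ξ • A).card : ℝ) ≥ c * M)), n ^ 4 := by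
          rw [Finset.sum_const, nsmul_eq_mul]
      _ ≤ ∑ ξ ∈ S.filter (fun ξ => ¬ (((A + ξ • A).card : ℝ) ≥ c * M)),
            c * M * (En A ξ : ℝ) := Finset.sum_le_sum hbad
      _ = c * M * ∑ ξ ∈ S.filter (fun ξ => ¬ (((A + ξ • A).card : ℝ) ≥ c * M)),
            (En A ξ : ℝ) := by rw [Finset.mul_sum]
      _ ≤ c * M * ∑ ξ ∈ S, (En A ξ : ℝ) :=
          mul_le_mul_of_nonneg_left
            (Finset.sum_le_sum_of_subset_of_nonneg (Finset.filter_subset _ _)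
              (fun ξ _ _ => Nat.cast_nonneg _)) hcM0
  have hMX : M * (s * n ^ 4 / p + (p : ℝ) * n ^ 2) = s * n ^ 4 := by
    have hn0 : n ≠ 0 := by linarith
    have hs0 : s ≠ 0 := by linarith
    have hp0' : (p : ℝ) ≠ 0 := ne_of_gt hp0
    have hX0' : X ≠ 0 := ne_of_gt hX0
    rw [hM, hX] at *
    field_simp
  have hbadle : (((S.filter (fun ξ => ¬ (((A + ξ • A).card : ℝ) ≥ c * M))).card : ℝ)) ≤ c * s := by
    have hn4 : (0 : ℝ) < n ^ 4 := by positivity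
    have h6 : (((S.filter (fun ξ => ¬ (((A + ξ • A).card : ℝ) ≥ c * M))).card : ℝ)) * n ^ 4
        ≤ c * (s * n ^ 4) := by
      calc (((S.filter (fun ξ => ¬ (((A + ξ • A).card : ℝ) ≥ c * M))).card : ℝ)) * n ^ 4
          ≤ c * M * ∑ ξ ∈ S, (En A ξ : ℝ) := hbadsum
        _ ≤ c * M * (s * n ^ 4 / p + (p : ℝ) * n ^ 2) :=
            mul_le_mul_of_nonneg_left hEsum hcM0
        _ = c * (s * n ^ 4) := by rw [mul_assoc, hMX]
    nlinarith [h6, hn4]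
  have hgood : (((S.filter (fun ξ => ((A + ξ • A).card : ℝ) ≥ c * M)).card : ℝ))
      = s - (((S.filter (fun ξ => ¬ (((A + ξ • A).card : ℝ) ≥ c * M))).card : ℝ)) := by
    rw [hs, ← hsplit]
    push_cast
    ring
  rw [ge_iff_le, hgood]
  nlinarith [hbadle, hs1]
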